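/- The set X̄ = {(X(a), Y(a)) : k ≥ 1, a ∈ {0,1}^k} equals the set {(c + dφ, c + dψ) : c, d ∈ ℤ, d ≥ 0, c + dψ ∈ [−1/φ², 1/φ)}. -/
import Mathlib


open Real Finset

noncomputable section

/-- The golden mean φ = (1+√5)/2. -/
def phi : ℝ := (1 + Real.sqrt 5) / 2

/-- ψ = (1−√5)/2 = −1/φ. -/
def psi : ℝ := (1 - Real.sqrt 5) / 2

/-- A word `a : Fin k → ℕ` is binary if all its letters are 0 or 1. -/
def IsBin {k : ℕ} (a : Fin k → ℕ) : Prop := ∀ i, a i ≤ 1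

/-- N(a) = ∑_{i=1}^k a_i F_{k+2−i}  (here `i : Fin k` corresponds to `i+1`). -/
def Nw {k : ℕ} (a : Fin k → ℕ) : ℕ := ∑ i : Fin k, a i * Nat.fib (k + 1 - (i : ℕ))

/-- X(a) = ∑_{i=1}^k a_i φ^{k+2−i}. -/
def Xw {k : ℕ} (a : Fin k → ℕ) : ℝ := ∑ i : Fin k, (a i : ℝ) * phi ^ (k + 1 - (i : ℕ))

/-- Y(a) = ∑_{i=1}^k a_i ψ^{k+2−i}. -/
def Yw {k : ℕ} (a : Fin k → ℕ) : ℝ := ∑ i : Fin k, (a i : ℝ) * psi ^ (k + 1 - (i : ℕ))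

lemma sqrt5_sq : Real.sqrt 5 ^ 2 = 5 := Real.sq_sqrt (by norm_num)
lemma sqrt5_gt : 2 < Real.sqrt 5 := by nlinarith [Real.sqrt_nonneg 5, sqrt5_sq]
lemma sqrt5_lt : Real.sqrt 5 < 3 := by nlinarith [Real.sqrt_nonneg 5, sqrt5_sq]
lemma psi_neg : psi < 0 := by unfold psi; linarith [sqrt5_gt]
lemma psi_gt : -1 < psi := by unfold psi; linarith [sqrt5_lt]
lemma psi_sq : psi ^ 2 = psi + 1 := by unfold psi; nlinarith [sqrt5_sq]
lemma phi_sq : phi ^ 2 = phi + 1 := by unfold phi; nlinarith [sqrt5_sq]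
lemma phi_psi : phi * psi = -1 := by unfold phi psi; nlinarith [sqrt5_sq]
lemma phi_pos : 0 < phi := by unfold phi; linarith [sqrt5_gt]
lemma inv_phi : 1 / phi = -psi := by
  rw [div_eq_iff (ne_of_gt phi_pos)]
  linarith [phi_psi]
lemma inv_phi_sq : 1 / phi ^ 2 = psi ^ 2 := by
  rw [one_div, ← inv_pow, ← one_div, inv_phi]; ring

lemma pow_fib {x : ℝ} (hx : x ^ 2 = x + 1) :
    ∀ n : ℕ, x ^ (n + 1) = Nat.fib (n + 1) * x + Nat.fib n := by
  intro n
  induction n using Nat.twoStepInduction with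
  | zero => simp
  | one => simpa using hx
  | more n ih1 ih2 =>
    have h : x ^ (n + 3) = x ^ (n + 2) + x ^ (n + 1) := by
      have h2 : x ^ (n + 3) = x ^ (n+1) * x ^ 2 := by ring
      rw [h2, hx]; ring
    rw [h, ih1, ih2]
    have e1 : Nat.fib (n + 2 + 1) = Nat.fib (n + 1) + Nat.fib (n + 1 + 1) :=
      Nat.fib_add_two (n := n + 1)
    have e2 : Nat.fib (n + 2) = Nat.fib n + Nat.fib (n + 1) := Nat.fib_add_two
    rw [e1, e2]
    push_cast
    ring

/-- C(a) = ∑ a_i F_{k+1−i}, so that X(a) = C(a) + N(a)·φ and Y(a) = C(a) + N(a)·ψ. -/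
def Cw {k : ℕ} (a : Fin k → ℕ) : ℕ := ∑ i : Fin k, a i * Nat.fib (k - (i : ℕ))

lemma Xw_eq {k : ℕ} (a : Fin k → ℕ) : Xw a = (Cw a : ℝ) + (Nw a : ℝ) * phi := by
  unfold Xw Cw Nw
  push_cast
  rw [Finset.sum_mul, ← Finset.sum_add_distrib]
  apply Finset.sum_congr rfl
  intro i _
  have h1 : k + 1 -(i:ℕ) = (k - (i:ℕ)) + 1 := by omega
  rw [h1, pow_fib phi_sq]
  ring

lemma Yw_eq {k : ℕ} (a : Fin k → ℕ) : Yw a = (Cw a : ℝ) + (Nw a : ℝ) * psi := by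
  unfold Yw Cw Nw
  push_cast
  rw [Finset.sum_mul, ← Finset.sum_add_distrib]
  apply Finset.sum_congr rfl
  intro i _
  have h1 : k + 1 - (i:ℕ) = (k - (i:ℕ)) + 1 := by omega
  rw [h1, pow_fib psi_sq]
  ring

lemma Yw_succ {k : ℕ} (a : Fin (k+1) → ℕ) :
    Yw a = psi * Yw (Fin.init a) + (a (Fin.last k) : ℝ) * psi ^ 2 := by
  unfold Yw
  rw [Fin.sum_univ_castSucc, Finset.mul_sum]
  congr 1
  · apply Finset.sum_congr rfl
    intro i _
    have hi : (i:ℕ) < k := i.isLt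
    have h : k + 1 + 1 - ((i.castSucc : Fin (k+1)) : ℕ) = (k + 1 - (i:ℕ)) + 1 := by
      simp only [Fin.coe_castSucc]; omega
    rw [h, Fin.init]
    ring
  · have h : k + 1 + 1 - ((Fin.last k : Fin (k+1)) : ℕ) = 2 := by
      simp [Fin.val_last]; omega
    rw [h]

lemma Yw_bound : ∀ (k : ℕ) (a : Fin k → ℕ), IsBin a → Yw a ∈ Set.Ioo (-psi^2) (-psi) := by
  intro k
  induction k with
  | zero =>
    intro a _
    have h : Yw a = 0 := by simp [Yw]
    rw [h]
    constructor
    · nlinarith [psi_neg, psi_sq]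
    · linarith [psi_neg]
  | succ k ih =>
    intro a ha
    obtain ⟨h1, h2⟩ := ih (Fin.init a) (fun i => ha i.castSucc)
    rw [Yw_succ]
    have hb : a (Fin.last k) = 0 ∨ a (Fin.last k) = 1 := by
      have := ha (Fin.last k); omega
    rcases hb with hb | hb <;> rw [hb] <;> push_cast <;> constructor <;>
      nlinarith [psi_neg, psi_gt, psi_sq]

lemma Nw_cons {k : ℕ} (b : ℕ) (a : Fin k → ℕ) :
    Nw (Fin.cons b a) = b * Nat.fib (k + 2) + Nw a := by
  unfold Nw
  rw [Fin.sum_univ_succ]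
  congr 1
  apply Finset.sum_congr rfl
  intro i _
  simp only [Fin.cons_succ, Fin.val_succ]
  congr 2
  omega

lemma zeck : ∀ (k n : ℕ), n < Nat.fib (k + 2) → ∃ a : Fin k → ℕ, IsBin a ∧ Nw a = n := by
  intro k
  induction k with
  | zero =>
    intro n hn
    have h1 : Nat.fib (0 + 2) = 1 := rfl
    refine ⟨fun _ => 0, fun i => by norm_num, ?_⟩
    have : Nw (fun _ : Fin 0 => 0) = 0 := by simp [Nw]
    omega
  | succ k ih =>
    intro n hn
    by_cases h : n < Nat.fib (k + 2)
    · obtain ⟨a, ha, hNa⟩ := ih n h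
      refine ⟨Fin.cons 0 a, ?_, ?_⟩
      · intro i
        induction i using Fin.cases with
        | zero => simp
        | succ j => simpa using ha j
      · rw [Nw_cons]; omega
    · have hf : Nat.fib (k + 1 + 2) = Nat.fib (k+1) + Nat.fib (k + 2) := Nat.fib_add_two
      have hle : Nat.fib (k + 1) ≤ Nat.fib (k + 2) := Nat.fib_le_fib_succ
      have h2 : n - Nat.fib (k + 2) < Nat.fib (k + 2) := by omega
      obtain ⟨a, ha, hNa⟩ := ih _ h2
      refine ⟨Fin.cons 1 a, ?_, ?_⟩
      · intro i
        induction i using Fin.cases with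
        | zero => simp
        | succ j => simpa using ha j
      · rw [Nw_cons]; omega

lemma lt_fib : ∀ n : ℕ, n < Nat.fib (n + 2) := by
  intro n
  induction n with
  | zero => decide
  | succ n ih =>
    have h : Nat.fib (n + 1 + 2) = Nat.fib (n + 1) + Nat.fib (n + 2) := Nat.fib_add_two
    have hp : 0 < Nat.fib (n + 1) := Nat.fib_pos.mpr (by omega)
    omega

/-- the set X̄ = {(X(a), Y(a)) : k ≥ 1, a ∈ {0,1}^k} equals
{(c + dφ, c + dψ) : c, d ∈ ℤ, d ≥ 0, c + dψ ∈ [−1/φ², 1/φ)}. -/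
theorem stmt_4 :
    {p : ℝ × ℝ | ∃ (k : ℕ) (a : Fin k → ℕ), 1 ≤ k ∧ IsBin a ∧ p = (Xw a, Yw a)} =
    {p : ℝ × ℝ | ∃ c d : ℤ, 0 ≤ d ∧ p = ((c : ℝ) + (d : ℝ) * phi, (c : ℝ) + (d : ℝ) * psi) ∧
      (c : ℝ) + (d : ℝ) * psi ∈ Set.Ico (-(1 / phi ^ 2)) (1 / phi)} := by
  ext p
  simp only [Set.mem_setOf_eq]
  constructor
  · rintro ⟨k, a, hk, ha, rfl⟩
    refine ⟨(Cw a : ℤ), (Nw a : ℤ), by positivity, ?_, ?_⟩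
    · rw [Xw_eq, Yw_eq]
      push_cast
      rfl
    · obtain ⟨hb1, hb2⟩ := Yw_bound k a ha
      rw [Yw_eq] at hb1 hb2
      constructor
      · rw [inv_phi_sq]; push_cast; linarith
      · rw [inv_phi]; push_cast; linarith
  · rintro ⟨c, d, hd, rfl, hy1, hy2⟩
    obtain ⟨n, rfl⟩ := Int.eq_ofNat_of_zero_le hd
    obtain ⟨a, ha, hNa⟩ := zeck (n + 1) n
      (lt_of_lt_of_le (lt_fib n) (Nat.fib_mono (by omega)))
    rw [inv_phi_sq] at hy1
    rw [inv_phi] at hy2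
    obtain ⟨hb1, hb2⟩ := Yw_bound (n + 1) a ha
    rw [Yw_eq, hNa] at hb1 hb2
    push_cast at hy1 hy2 hb1 hb2
    have key : c = (Cw a : ℤ) := by
      have hlt : ((c - (Cw a : ℤ) : ℤ) : ℝ) < 1 := by push_cast; linarith [psi_sq]
      have hgt : (-1 : ℝ) < ((c - (Cw a : ℤ) : ℤ) : ℝ) := by push_cast; linarith [psi_sq]
      have h1 : (c - (Cw a : ℤ) : ℤ) < 1 := by exact_mod_cast hlt
      have h2 : (-1 : ℤ) < (c - (Cw a : ℤ) : ℤ) := by exact_mod_cast hgt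
      omega
    refine ⟨n + 1, a, by omega, ha, ?_⟩
    rw [Xw_eq, Yw_eq, hNa, key]
    push_cast
    rfl

end
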